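/- For all η, η̃ ∈ A and all φ ∈ A: α^η(φ) = exp( (1/2)·{η−η̃, φ−η̃} − (1/4)·g(η−η̃, η−η̃) − (i/2)·θ(η, η−η̃) − (i/2)·θ(η̃, η−η̃) ) · α^{η̃}(φ). -/

import Mathlib

/-- The wave function `α^η : A → ℂ`,
`α^η(φ) = exp( (i/2)·θ(η, φ−η) + (i/2)·θ(φ, φ−η) − (1/4)·g(φ−η, φ−η) )`,
where `g(x,y) = Re ⟪x,y⟫`. -/
noncomputable def alphaFn {H A : Type*} [NormedAddCommGroup H] [InnerProductSpace ℂ H]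
    [AddTorsor H A] (θ : A → H → ℝ) (η φ : A) : ℂ :=
  Complex.exp ((Complex.I / 2) * ((θ η (φ -ᵥ η) : ℝ) : ℂ)
    + (Complex.I / 2) * ((θ φ (φ -ᵥ η) : ℝ) : ℂ)
    - (1/4 : ℂ) * (((inner ℂ (φ -ᵥ η) (φ -ᵥ η) : ℂ).re : ℝ) : ℂ))

/-- For all `η, ηt ∈ A` and all `φ ∈ A`:
`α^η(φ) = exp( (1/2)·{η−ηt, φ−ηt} − (1/4)·g(η−ηt, η−ηt) − (i/2)·θ(η, η−ηt)
− (i/2)·θ(ηt, η−ηt) ) · α^{ηt}(φ)`. -/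
theorem statement2
    {H A : Type*} [NormedAddCommGroup H] [InnerProductSpace ℂ H] [CompleteSpace H]
    [AddTorsor H A]
    (θ : A → H → ℝ) (hθ : ∀ η : A, IsLinearMap ℝ (θ η))
    (B : H → H → ℝ)
    (hB₁ : ∀ y : H, IsLinearMap ℝ (fun x => B x y))
    (hB₂ : ∀ x : H, IsLinearMap ℝ (B x))
    (hθB : ∀ (η : A) (ξ ξ' : H), θ (ξ +ᵥ η) ξ' = θ η ξ' + B ξ ξ')
    (hωB : ∀ ξ ξ' : H,
      (1/2 : ℝ) * (inner ℂ ξ ξ' : ℂ).im = (1/2 : ℝ) * (B ξ ξ' - B ξ' ξ)) :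
    ∀ η ηt φ : A,
      alphaFn θ η φ =
        Complex.exp ((1/2 : ℂ) * (inner ℂ (η -ᵥ ηt) (φ -ᵥ ηt) : ℂ)
          - (1/4 : ℂ) * (((inner ℂ (η -ᵥ ηt) (η -ᵥ ηt) : ℂ).re : ℝ) : ℂ)
          - (Complex.I / 2) * ((θ η (η -ᵥ ηt) : ℝ) : ℂ)
          - (Complex.I / 2) * ((θ ηt (η -ᵥ ηt) : ℝ) : ℂ))
        * alphaFn θ ηt φ := by
  intro η ηt φ
  have ha : φ -ᵥ η = (φ -ᵥ ηt) - (η -ᵥ ηt) := (vsub_sub_vsub_cancel_right φ η ηt).symm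
  set b : H := φ -ᵥ ηt with hb
  set c : H := η -ᵥ ηt with hc
  have hη : η = c +ᵥ ηt := (vsub_vadd η ηt).symm
  have hφ : φ = b +ᵥ ηt := (vsub_vadd φ ηt).symm
  have hθηa : θ η (φ -ᵥ η) = θ η b - θ η c := by
    rw [ha, (hθ η).map_sub]
  have hθφa : θ φ (φ -ᵥ η) = θ φ b - θ φ c := by
    rw [ha, (hθ φ).map_sub]
  have hθηb : θ η b = θ ηt b + B c b := by rw [hη]; exact hθB ηt c b
  have hθηc : θ η c = θ ηt c + B c c := by rw [hη]; exact hθB ηt c c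
  have hθφb : θ φ b = θ ηt b + B b b := by rw [hφ]; exact hθB ηt b b
  have hθφc : θ φ c = θ ηt c + B b c := by rw [hφ]; exact hθB ηt b c
  have hre : (inner ℂ (φ -ᵥ η) (φ -ᵥ η) : ℂ).re
      = (inner ℂ b b : ℂ).re - 2 * (inner ℂ c b : ℂ).re + (inner ℂ c c : ℂ).re := by
    rw [ha, inner_sub_left, inner_sub_right, inner_sub_right]
    have : (inner ℂ b c : ℂ).re = (inner ℂ c b : ℂ).re := by
      rw [← inner_conj_symm b c, Complex.conj_re]
    simp only [Complex.sub_re, Complex.add_re] at *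
    linarith
  have hIm : (inner ℂ c b : ℂ).im = B c b - B b c := by
    have := hωB c b; linarith
  obtain ⟨r, hr⟩ : ∃ r : ℝ, (inner ℂ c b : ℂ) = (r : ℂ) + ((B c b - B b c : ℝ) : ℂ) * Complex.I :=
    ⟨(inner ℂ c b : ℂ).re, by rw [← hIm]; exact (Complex.re_add_im _).symm⟩
  have hrre : (inner ℂ c b : ℂ).re = r := by rw [hr]; simp
  rw [hrre] at hre
  rw [alphaFn, alphaFn, ← Complex.exp_add]
  congr 1
  rw [hθηa, hθφa, hθηb, hθηc, hθφb, hθφc, hre, hr]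
  push_cast
  ring
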